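/- Convex Angle Theorem: let n ≥ 2 and let a₀, …, aₙ be points in the real plane ℝ² such that no three of them are on the same line, in the sense that for all pairwise distinct indices p, q, r ≤ n, either left(a_p, a_q, a_r) or right(a_p, a_q, a_r) holds. Then there exist pairwise distinct indices i, j, k ≤ n such that every other point falls in the angle ∠(a_j, a_i, a_k): for every index l ≤ n with l ≠ i, if l ≠ j then left(a_i, a_j, a_l) holds, and if l ≠ k then right(a_i, a_k, a_l) holds. -/

import Mathlib

/-- `leftOf P Q R` holds iff `R` is to the left of the oriented line `P Q`. -/
def leftOf (P Q R : ℝ × ℝ) : Prop :=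
  (Q.1 - P.1) * (R.2 - P.2) - (R.1 - P.1) * (Q.2 - P.2) > 0

/-- `rightOf P Q R` holds iff `R` is to the right of the oriented line `P Q`. -/
def rightOf (P Q R : ℝ × ℝ) : Prop :=
  (Q.1 - P.1) * (R.2 - P.2) - (R.1 - P.1) * (Q.2 - P.2) < 0

/-- Angular key of a vector in the right half-plane. -/
noncomputable def angKey (w : ℝ × ℝ) : ℝ :=
  if w.1 = 0 then Real.pi / 2 else Real.arctan (w.2 / w.1)

lemma cross_pos_iff_key (u v : ℝ × ℝ)
    (hu : 0 < u.1 ∨ (u.1 = 0 ∧ 0 < u.2)) (hv : 0 < v.1 ∨ (v.1 = 0 ∧ 0 < v.2))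
    (hc : u.1 * v.2 - v.1 * u.2 ≠ 0) :
    (0 < u.1 * v.2 - v.1 * u.2) ↔ angKey u < angKey v := by
  rcases hu with hu | ⟨hu0, hu2⟩ <;> rcases hv with hv | ⟨hv0, hv2⟩
  · simp only [angKey, if_neg (ne_of_gt hu), if_neg (ne_of_gt hv)]
    rw [Real.arctan_strictMono.lt_iff_lt, div_lt_div_iff₀ hu hv]
    constructor <;> intro h <;> nlinarith
  · simp only [angKey, if_neg (ne_of_gt hu), if_pos hv0]
    constructor
    · intro _; exact Real.arctan_lt_pi_div_two _
    · intro _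
      have h1 := mul_pos hu hv2
      have h2 : v.1 * u.2 = 0 := mul_eq_zero_of_left hv0 u.2
      linarith
  · simp only [angKey, if_pos hu0, if_neg (ne_of_gt hv)]
    constructor
    · intro h; exfalso
      have h1 := mul_pos hv hu2
      have h2 : u.1 * v.2 = 0 := mul_eq_zero_of_left hu0 v.2
      linarith
    · intro h; exact absurd h (not_lt.mpr (le_of_lt (Real.arctan_lt_pi_div_two _)))
  · exfalso; apply hc; rw [hu0, hv0]; ring

theorem convex_angle (n : ℕ) (hn : 2 ≤ n) (a : ℕ → ℝ × ℝ)
    (hgen : ∀ p ≤ n, ∀ q ≤ n, ∀ r ≤ n, p ≠ q → q ≠ r → p ≠ r →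
      leftOf (a p) (a q) (a r) ∨ rightOf (a p) (a q) (a r)) :
    ∃ i ≤ n, ∃ j ≤ n, ∃ k ≤ n, i ≠ j ∧ j ≠ k ∧ i ≠ k ∧
      ∀ l ≤ n, l ≠ i →
        (l ≠ j → leftOf (a i) (a j) (a l)) ∧
        (l ≠ k → rightOf (a i) (a k) (a l)) := by
  classical
  -- the determinant of any three distinct indices is nonzero
  have hdet : ∀ p ≤ n, ∀ q ≤ n, ∀ r ≤ n, p ≠ q → q ≠ r → p ≠ r →
      ((a q).1 - (a p).1) * ((a r).2 - (a p).2)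
        - ((a r).1 - (a p).1) * ((a q).2 - (a p).2) ≠ 0 := by
    intro p hp q hq r hr hpq hqr hpr
    rcases hgen p hp q hq r hr hpq hqr hpr with h | h
    · exact ne_of_gt h
    · exact ne_of_lt h
  -- choose i lexicographically minimal
  obtain ⟨i, hiN, hi⟩ := Finset.exists_min_image (Finset.range (n+1))
    (fun l => toLex (a l)) ⟨0, by simp⟩
  have hin : i ≤ n := Nat.lt_succ_iff.mp (Finset.mem_range.mp hiN)
  -- all other points differ from a i
  have hne : ∀ l ≤ n, l ≠ i → a l ≠ a i := by
    intro l hl hli hal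
    obtain ⟨r, hr2, hri, hrl⟩ : ∃ r ≤ 2, r ≠ i ∧ r ≠ l := by
      by_cases h0 : i = 0 ∨ l = 0
      · by_cases h1 : i = 1 ∨ l = 1
        · exact ⟨2, by omega, by omega, by omega⟩
        · exact ⟨1, by omega, by omega, by omega⟩
      · exact ⟨0, by omega, by omega, by omega⟩
    have := hdet i hin l hl r (le_trans hr2 hn) (Ne.symm hli) hrl.symm (Ne.symm hri)
    apply this
    rw [hal]; ring
  -- half-plane condition for differences
  have hH : ∀ l ≤ n, l ≠ i →
      0 < (a l).1 - (a i).1 ∨ ((a l).1 - (a i).1 = 0 ∧ 0 < (a l).2 - (a i).2) := by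
    intro l hl hli
    have hle : toLex (a i) ≤ toLex (a l) :=
      hi l (Finset.mem_range.mpr (Nat.lt_succ_of_le hl))
    have hlt : toLex (a i) < toLex (a l) :=
      lt_of_le_of_ne hle (fun h => hne l hl hli (toLex.injective h).symm)
    rw [Prod.Lex.lt_iff] at hlt
    simp only [ofLex_toLex] at hlt
    rcases hlt with h | ⟨h1, h2⟩
    · left; linarith
    · right; exact ⟨by linarith, by linarith⟩
  set key : ℕ → ℝ := fun l => angKey ((a l).1 - (a i).1, (a l).2 - (a i).2) with hkey
  set S : Finset ℕ := (Finset.range (n+1)).erase i with hS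
  have hmemS : ∀ l, l ∈ S ↔ (l ≤ n ∧ l ≠ i) := by
    intro l
    simp [hS, Finset.mem_erase, Finset.mem_range, Nat.lt_succ_iff, and_comm]
  -- cross product vs key
  have hiff : ∀ l ∈ S, ∀ m ∈ S, l ≠ m →
      ((0 < ((a l).1 - (a i).1) * ((a m).2 - (a i).2)
        - ((a m).1 - (a i).1) * ((a l).2 - (a i).2)) ↔ key l < key m) := by
    intro l hl m hm hlm
    obtain ⟨hln, hli⟩ := (hmemS l).mp hl
    obtain ⟨hmn, hmi⟩ := (hmemS m).mp hm
    exact cross_pos_iff_key ((a l).1 - (a i).1, (a l).2 - (a i).2)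
      ((a m).1 - (a i).1, (a m).2 - (a i).2) (hH l hln hli) (hH m hmn hmi)
      (hdet i hin l hln m hmn (Ne.symm hli) hlm (Ne.symm hmi))
  have hkeyne : ∀ l ∈ S, ∀ m ∈ S, l ≠ m → key l ≠ key m := by
    intro l hl m hm hlm
    obtain ⟨hln, hli⟩ := (hmemS l).mp hl
    obtain ⟨hmn, hmi⟩ := (hmemS m).mp hm
    have hc := hdet i hin l hln m hmn (Ne.symm hli) hlm (Ne.symm hmi)
    rcases lt_or_gt_of_ne hc with h | h
    · have : 0 < ((a m).1 - (a i).1) * ((a l).2 - (a i).2)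
        - ((a l).1 - (a i).1) * ((a m).2 - (a i).2) := by linarith
      exact ((hiff m hm l hl hlm.symm).mp this).ne'
    · exact ne_of_lt ((hiff l hl m hm hlm).mp h)
  -- S is nonempty, in fact has two distinct elements
  obtain ⟨p, hp2, hpi⟩ : ∃ p ≤ 2, p ≠ i := by
    by_cases h0 : i = 0
    · exact ⟨1, by omega, by omega⟩
    · exact ⟨0, by omega, fun h => h0 h.symm⟩
  obtain ⟨q, hq2, hqi, hqp⟩ : ∃ q ≤ 2, q ≠ i ∧ q ≠ p := by
    by_cases h0 : i = 0 ∨ p = 0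
    · by_cases h1 : i = 1 ∨ p = 1
      · exact ⟨2, by omega, by omega, by omega⟩
      · exact ⟨1, by omega, by omega, by omega⟩
    · exact ⟨0, by omega, by omega, by omega⟩
  have hpS : p ∈ S := (hmemS p).mpr ⟨le_trans hp2 hn, hpi⟩
  have hqS : q ∈ S := (hmemS q).mpr ⟨le_trans hq2 hn, hqi⟩
  obtain ⟨j, hjS, hj⟩ := Finset.exists_min_image S key ⟨p, hpS⟩
  obtain ⟨k, hkS, hk⟩ := Finset.exists_max_image S key ⟨p, hpS⟩
  obtain ⟨hjn, hji⟩ := (hmemS j).mp hjS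
  obtain ⟨hkn, hki⟩ := (hmemS k).mp hkS
  have hjk : j ≠ k := by
    intro hjk
    have h1 : key p = key j := le_antisymm (hjk ▸ hk p hpS) (hj p hpS)
    have h2 : key q = key j := le_antisymm (hjk ▸ hk q hqS) (hj q hqS)
    exact hkeyne p hpS q hqS hqp.symm (h1.trans h2.symm)
  refine ⟨i, hin, j, hjn, k, hkn, Ne.symm hji, hjk, Ne.symm hki, ?_⟩
  intro l hln hli
  have hlS : l ∈ S := (hmemS l).mpr ⟨hln, hli⟩
  constructor
  · intro hlj
    have hlt : key j < key l := lt_of_le_of_ne (hj l hlS) (hkeyne j hjS l hlS (Ne.symm hlj))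
    have := (hiff j hjS l hlS (Ne.symm hlj)).mpr hlt
    exact this
  · intro hlk
    have hlt : key l < key k := lt_of_le_of_ne (hk l hlS) (hkeyne l hlS k hkS hlk)
    have h := (hiff l hlS k hkS hlk).mpr hlt
    show _ < _
    unfold rightOf at *
    linarith
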